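/- arXiv:1512.01390 — 5 statements merged into one kernel-verified Lean document; each statement's English description precedes it below -/
import Mathlib

section
/- Let M and N be matroids on α with Disjoint M.E N.E, and let P be a matroid on γ. If a function h : α → γ is a strong map from M to P and also a strong map from N to P, then h is a strong map from M.disjointSum N to P; that is, for every flat F of P, the set h ⁻¹' F ∩ (M.E ∪ N.E) is a flat of M.disjointSum N. (This is the universal property making M.disjointSum N the coproduct of M and N with respect to strong maps.) -/
open Set

namespace Matroid

variable {α β γ : Type*}

/-- The rank of a set `X` in a matroid `M`: the size of a largest independent subset of `X`. -/
noncomputable def rk (M : Matroid α) (X : Set α) : ℕ :=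
  sSup (Set.ncard '' {I | M.Indep I ∧ I ⊆ X})

/-- A strong map from `M` to `N` is a function whose image of the ground set lies in the
ground set, and such that the preimage of every flat, intersected with the ground set,
is a flat. -/
def IsStrongMap (M : Matroid α) (N : Matroid β) (f : α → β) : Prop :=
  f '' M.E ⊆ N.E ∧ ∀ F, N.IsFlat F → M.IsFlat (f ⁻¹' F ∩ M.E)

/-- The deletion of `D` from `M`: the restriction of `M` to `M.E \ D`. -/
def delete' (M : Matroid α) (D : Set α) : Matroid α := M ↾ (M.E \ D)

/-- The contraction of `M` by `C`, defined as the dual of the deletion of `C`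
from the dual matroid. -/
def contract' (M : Matroid α) (C : Set α) : Matroid α := (M✶.delete' C)✶

scoped infixl:75 " ＼ " => Matroid.delete'
scoped infixl:75 " ／ " => Matroid.contract'

end Matroid

namespace Matroid

lemma flat_union_of_disjointSum {α : Type*} {M N : Matroid α} {hd : Disjoint M.E N.E}
    {A B : Set α} (hA : M.IsFlat A) (hB : N.IsFlat B) :
    (M.disjointSum N hd).IsFlat (A ∪ B) := by
  have hAB : (A ∪ B) ∩ M.E = A := by
    rw [union_inter_distrib_right, inter_eq_self_of_subset_left hA.subset_ground,
      ((hd.symm.mono_left hB.subset_ground).inter_eq), union_empty]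
  have hAB' : (A ∪ B) ∩ N.E = B := by
    rw [union_inter_distrib_right, inter_eq_self_of_subset_left hB.subset_ground,
      ((hd.mono_left hA.subset_ground).inter_eq), empty_union]
  refine ⟨fun I X hIF hIX ↦ ?_, ?_⟩
  · rw [disjointSum_isBasis_iff, hAB, hAB'] at hIF
    rw [disjointSum_isBasis_iff] at hIX
    have h1 : X ∩ M.E ⊆ A := hA.subset_of_isBasis_of_isBasis hIF.1 hIX.1
    have h2 : X ∩ N.E ⊆ B := hB.subset_of_isBasis_of_isBasis hIF.2.1 hIX.2.1
    intro x hx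
    rcases hIX.2.2.2 hx with hxM | hxN
    · exact Or.inl (h1 ⟨hx, hxM⟩)
    · exact Or.inr (h2 ⟨hx, hxN⟩)
  · rw [disjointSum_ground_eq]
    exact union_subset_union hA.subset_ground hB.subset_ground

/-- a function that is a strong map from each of `M` and `N` to `P` is a strong
map from `M.disjointSum N` to `P` (universal property of the coproduct). -/
theorem disjointSum_isStrongMap {α γ : Type*} (M N : Matroid α) (P : Matroid γ)
    (hd : Disjoint M.E N.E) (h : α → γ)
    (hM : M.IsStrongMap P h) (hN : N.IsStrongMap P h) :
    (M.disjointSum N hd).IsStrongMap P h := by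
  constructor
  · rw [disjointSum_ground_eq, image_union]
    exact union_subset hM.1 hN.1
  · intro F hF
    rw [disjointSum_ground_eq, inter_union_distrib_left]
    exact flat_union_of_disjointSum (hM.2 F hF) (hN.2 F hF)

end Matroid
end

section
/- Let f and g be strong maps from a matroid M on α to a matroid N on β, and let R = {x ∈ M.E | f x = g x}. If h : γ → α is a strong map from a matroid P to M such that f (h x) = g (h x) for every x ∈ P.E, then h '' P.E ⊆ R and h is a strong map from P to the restriction M ↾ R; that is, for every flat X of M ↾ R, the set h ⁻¹' X ∩ P.E is a flat of P. (This is the universal property making M ↾ R the equalizer of f and g with respect to strong maps.) -/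
open Set

namespace Matroid

variable {α β γ : Type*}

scoped infixl:75 " ＼ " => Matroid.delete'
scoped infixl:75 " ／ " => Matroid.contract'

end Matroid

namespace Matroid

private lemma restrict_closure_eq_aux (M : Matroid α) {R X : Set α} (hXR : X ⊆ R)
    (hR : R ⊆ M.E) : (M ↾ R).closure X = M.closure X ∩ R := by
  obtain ⟨I, hI⟩ := (M ↾ R).exists_isBasis X (by simpa)
  have hIM : M.IsBasis I X := ((isBasis_restrict_iff hR).1 hI).1
  rw [← hI.closure_eq_closure, ← hIM.closure_eq_closure]
  have hIR : I ⊆ R := hI.indep.subset_ground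
  ext e
  constructor
  · intro he
    rcases hI.indep.mem_closure_iff.1 he with hd | heI
    · rw [restrict_dep_iff] at hd
      obtain ⟨hni, hins⟩ := hd
      have heR : e ∈ R := hins (mem_insert _ _)
      refine ⟨hIM.indep.mem_closure_iff.2 (Or.inl ?_), heR⟩
      exact ⟨hni, insert_subset (hR heR) fun x hx => hR (hIR hx)⟩
    · exact ⟨hIM.indep.mem_closure_iff.2 (Or.inr heI), hIR heI⟩
  · rintro ⟨he, heR⟩
    rcases hIM.indep.mem_closure_iff.1 he with hd | heI
    · refine hI.indep.mem_closure_iff.2 (Or.inl ?_)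
      rw [restrict_dep_iff]
      exact ⟨hd.1, insert_subset heR hIR⟩
    · exact hI.indep.mem_closure_iff.2 (Or.inr heI)

private lemma closure_flat_aux (M : Matroid α) (X : Set α) : M.IsFlat (M.closure X) := by
  obtain ⟨I, hI⟩ := M.exists_isBasis (X ∩ M.E) inter_subset_right
  rw [← closure_inter_ground, ← hI.closure_eq_closure,
    hI.indep.closure_eq_setOf_isBasis_insert]
  set F := {x | M.IsBasis I (insert x I)}
  have hIF : M.IsBasis I F := hI.indep.isBasis_setOf_insert_isBasis
  refine ⟨fun J Y hJF hJY e heY ↦ show M.IsBasis _ _ from ?_, hIF.subset_ground⟩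
  exact (hIF.isBasis_of_isBasis_of_subset_of_subset (hJY.isBasis_union hJF) hJF.subset
    (hIF.subset.trans subset_union_right)).isBasis_subset (subset_insert _ _)
    (insert_subset (Or.inl heY) (hIF.subset.trans subset_union_right))

private lemma flat_restrict_imp (M : Matroid α) {R X : Set α} (hR : R ⊆ M.E)
    (hX : (M ↾ R).IsFlat X) : ∃ F, M.IsFlat F ∧ X = F ∩ R := by
  have hXR : X ⊆ R := hX.subset_ground
  refine ⟨M.closure X, M.closure_flat_aux X, ?_⟩
  have := hX.closure
  rw [restrict_closure_eq_aux M hXR hR] at this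
  exact this.symm

/-- universal property of the equalizer `M ↾ {x ∈ M.E | f x = g x}` of two
strong maps `f g : M → N`. -/
theorem equalizer_universal {α β γ : Type*} (M : Matroid α) (N : Matroid β) (P : Matroid γ)
    (f g : α → β) (hf : M.IsStrongMap N f) (hg : M.IsStrongMap N g)
    (h : γ → α) (hh : P.IsStrongMap M h)
    (heq : ∀ x ∈ P.E, f (h x) = g (h x)) :
    h '' P.E ⊆ {x ∈ M.E | f x = g x} ∧
      P.IsStrongMap (M ↾ {x ∈ M.E | f x = g x}) h := by
  set R : Set α := {x ∈ M.E | f x = g x} with hRdef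
  have hRE : R ⊆ M.E := fun x hx => hx.1
  have himg : h '' P.E ⊆ R := by
    rintro _ ⟨x, hx, rfl⟩
    exact ⟨hh.1 ⟨x, hx, rfl⟩, heq x hx⟩
  refine ⟨himg, ?_, ?_⟩
  · simpa using himg
  · intro X hX
    obtain ⟨F, hF, rfl⟩ := flat_restrict_imp M hRE hX
    have : h ⁻¹' (F ∩ R) ∩ P.E = h ⁻¹' F ∩ P.E := by
      ext x
      refine ⟨fun hx => ⟨hx.1.1, hx.2⟩, fun hx => ⟨⟨hx.1, himg ⟨x, hx.2, rfl⟩⟩, hx.2⟩⟩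
    rw [this]
    exact hh.2 F hF

end Matroid
end

section
/- Let K be a field, let m, n, p be finite types, and let A : Matrix m n K, B : Matrix p n K, C : Matrix m p K satisfy A = C * B. Then for any sets s ⊆ t of column indices (s, t : Set n with s ⊆ t), the ranks of the column submatrices satisfy rank(A restricted to columns t) + rank(B restricted to columns s) ≤ rank(B restricted to columns t) + rank(A restricted to columns s); that is, rank A_[t] − rank A_[s] ≤ rank B_[t] − rank B_[s]. -/
open Set

namespace Matroid

variable {α β γ : Type*}

scoped infixl:75 " ＼ " => Matroid.delete'
scoped infixl:75 " ／ " => Matroid.contract'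

end Matroid


open Module Submodule LinearMap in
private lemma aux_rank_nullity {K V W : Type*} [Field K] [AddCommGroup V] [Module K V]
    [AddCommGroup W] [Module K W] [FiniteDimensional K V]
    (f : V →ₗ[K] W) (p : Submodule K V) :
    finrank K (p.map f) + finrank K ↥(p ⊓ ker f) = finrank K p := by
  have h := LinearMap.finrank_range_add_finrank_ker (f.domRestrict p)
  rw [LinearMap.range_domRestrict, LinearMap.ker_domRestrict] at h
  have h2 : finrank K ↥((ker f).comap p.subtype) = finrank K ↥(p ⊓ ker f) := by
    have e := (Submodule.equivMapOfInjective p.subtype p.injective_subtype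
      ((ker f).comap p.subtype)).finrank_eq
    rwa [Submodule.map_comap_subtype] at e
  rw [h2] at h
  simpa using h

open Module Submodule LinearMap in
private lemma aux_ineq {K V W : Type*} [Field K] [AddCommGroup V] [Module K V]
    [AddCommGroup W] [Module K W] [FiniteDimensional K V]
    (f : V →ₗ[K] W) {p q : Submodule K V} (hpq : p ≤ q) :
    finrank K (q.map f) + finrank K p ≤ finrank K (p.map f) + finrank K q := by
  have hp := aux_rank_nullity f p
  have hq := aux_rank_nullity f q
  have hmono : finrank K ↥(p ⊓ ker f) ≤ finrank K ↥(q ⊓ ker f) :=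
    Submodule.finrank_mono (inf_le_inf_right _ hpq)
  omega

/-- if `A = C * B` then for column sets `s ⊆ t`,
`rank A_[t] - rank A_[s] ≤ rank B_[t] - rank B_[s]`. -/
theorem rank_submatrix_diff_le {K : Type*} [Field K] {m n p : Type*}
    [Fintype m] [Fintype n] [Fintype p]
    (A : Matrix m n K) (B : Matrix p n K) (C : Matrix m p K) (hABC : A = C * B)
    (s t : Set n) [Fintype s] [Fintype t] (hst : s ⊆ t) :
    (A.submatrix id (Subtype.val : t → n)).rank
      + (B.submatrix id (Subtype.val : s → n)).rank ≤
    (B.submatrix id (Subtype.val : t → n)).rank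
      + (A.submatrix id (Subtype.val : s → n)).rank := by
  classical
  subst hABC
  have key : ∀ (X : Set n) [Fintype X],
      ((C * B).submatrix id (Subtype.val : X → n)).rank
        = Module.finrank K
            ((LinearMap.range (B.submatrix id (Subtype.val : X → n)).mulVecLin).map
              C.mulVecLin) := by
    intro X _
    rw [Matrix.submatrix_mul C B id id (Subtype.val : X → n) Function.bijective_id,
      Matrix.submatrix_id_id]
    show Module.finrank K _ = _
    rw [Matrix.mulVecLin_mul, LinearMap.range_comp]
  have hrange : ∀ (X : Set n) [Fintype X],
      Set.range (B.submatrix id (Subtype.val : X → n)).col = B.col '' X := by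
    intro X _
    have : (B.submatrix id (Subtype.val : X → n)).col = B.col ∘ (Subtype.val : X → n) := rfl
    rw [this, Set.range_comp, Subtype.range_val]
  have hle : LinearMap.range (B.submatrix id (Subtype.val : s → n)).mulVecLin
      ≤ LinearMap.range (B.submatrix id (Subtype.val : t → n)).mulVecLin := by
    rw [Matrix.range_mulVecLin, Matrix.range_mulVecLin, hrange s, hrange t]
    exact Submodule.span_mono (Set.image_mono hst)
  rw [key s, key t]
  show _ + Module.finrank K (LinearMap.range (B.submatrix id (Subtype.val : s → n)).mulVecLin)
      ≤ Module.finrank K (LinearMap.range (B.submatrix id (Subtype.val : t → n)).mulVecLin) + _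
  have h := aux_ineq C.mulVecLin hle
  omega
end

section
/- Let K be a field and V, W vector spaces over K, and let f, g : V →ₗ[K] W be linear maps such that Submodule.map f X = Submodule.map g X for every submodule X of V. Then there exists a scalar c : K with g = c • f. -/
open Set

namespace Matroid

variable {α β γ : Type*}

scoped infixl:75 " ＼ " => Matroid.delete'
scoped infixl:75 " ／ " => Matroid.contract'

end Matroid

/-- two linear maps with the same image on every submodule are scalar
multiples of each other. -/
theorem exists_smul_eq_of_map_submodule_eq {K V W : Type*} [Field K]
    [AddCommGroup V] [Module K V] [AddCommGroup W] [Module K W]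
    (f g : V →ₗ[K] W)
    (h : ∀ X : Submodule K V, X.map f = X.map g) :
    ∃ c : K, g = c • f := by
  have key : ∀ v : V, ∃ c : K, g v = c • f v := by
    intro v
    have hX := h (Submodule.span K {v})
    have hg : g v ∈ (Submodule.span K {v}).map g :=
      Submodule.mem_map_of_mem (Submodule.mem_span_singleton_self v)
    rw [← hX, Submodule.map_span, Set.image_singleton] at hg
    obtain ⟨c, hc⟩ := Submodule.mem_span_singleton.1 hg
    exact ⟨c, hc.symm⟩
  by_cases hf : ∀ v : V, f v = 0
  · refine ⟨0, ?_⟩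
    ext v
    obtain ⟨c, hc⟩ := key v
    simp [hc, hf v]
  · push_neg at hf
    obtain ⟨v0, hv0⟩ := hf
    obtain ⟨c0, hc0⟩ := key v0
    refine ⟨c0, ?_⟩
    ext v
    simp only [LinearMap.smul_apply]
    obtain ⟨c, hc⟩ := key v
    by_cases hfv : f v = 0
    · simp [hc, hfv]
    · by_cases hdep : ∃ a : K, f v = a • f v0
      · obtain ⟨a, ha⟩ := hdep
        have hz : f (v - a • v0) = 0 := by simp [map_sub, map_smul, ha]
        obtain ⟨d, hd⟩ := key (v - a • v0)
        rw [hz, smul_zero, map_sub, map_smul, sub_eq_zero] at hd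
        rw [hd, hc0, ha, smul_comm]
      · obtain ⟨c', hc'⟩ := key (v + v0)
        rw [map_add, map_add, hc, hc0, smul_add] at hc'
        have hx : (c - c') • f v = (c' - c0) • f v0 := by
          rw [sub_smul, sub_smul, sub_eq_iff_eq_add]
          linear_combination (norm := module) hc'
        have hcc' : c = c' := by
          by_contra hne
          exact hdep ⟨(c - c')⁻¹ * (c' - c0), by
            rw [mul_smul, ← hx, inv_smul_smul₀ (sub_ne_zero.2 hne)]⟩
        have hc0c' : c0 = c' := by
          have : (c' - c0) • f v0 = 0 := by
            rw [← hx, hcc', sub_self, zero_smul]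
          rcases smul_eq_zero.1 this with h1 | h1
          · exact (sub_eq_zero.1 h1).symm
          · exact absurd h1 hv0
        rw [hc, hcc', hc0c']
end

section
/- Let M be a finite matroid on α and N a finite matroid on β, and let f : α → β satisfy f '' M.E ⊆ N.E and the strong-map rank condition: for all X ⊆ Y ⊆ M.E, N.rk (f '' Y) + M.rk X ≤ M.rk Y + N.rk (f '' X). Let Z' ⊆ N.E and Z = f ⁻¹' Z' ∩ M.E. Then f satisfies the same rank condition between the contractions: for all X ⊆ Y ⊆ M.E \ Z, (N ／ Z').rk (f '' Y) + (M ／ Z).rk X ≤ (M ／ Z).rk Y + (N ／ Z').rk (f '' X). (Contraction is functorial on strong maps whose domain contraction set is the preimage of the codomain contraction set.) -/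
open Set

namespace Matroid

variable {α β γ : Type*}

scoped infixl:75 " ＼ " => Matroid.delete'
scoped infixl:75 " ／ " => Matroid.contract'

end Matroid

namespace Matroid

variable {M : Matroid α}

lemma rk_bddAbove (M : Matroid α) [M.Finite] (X : Set α) :
    BddAbove (Set.ncard '' {I | M.Indep I ∧ I ⊆ X}) := by
  refine ⟨M.E.ncard, ?_⟩
  rintro n ⟨I, ⟨hI, -⟩, rfl⟩
  exact ncard_le_ncard hI.subset_ground M.ground_finite

lemma Indep.ncard_le_rk [M.Finite] {I X : Set α} (hI : M.Indep I) (hIX : I ⊆ X) :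
    I.ncard ≤ M.rk X :=
  le_csSup (M.rk_bddAbove X) ⟨I, ⟨hI, hIX⟩, rfl⟩

lemma rk_eq_ncard_of_basis [M.Finite] {I X : Set α} (hI : M.IsBasis I X) : M.rk X = I.ncard := by
  refine le_antisymm (csSup_le ⟨_, ⟨I, ⟨hI.indep, hI.subset⟩, rfl⟩⟩ ?_)
    (hI.indep.ncard_le_rk hI.subset)
  rintro n ⟨J, ⟨hJ, hJX⟩, rfl⟩
  obtain ⟨K, hK, hJK⟩ := hJ.subset_isBasis_of_subset hJX hI.subset_ground
  have h1 : K.ncard = I.ncard := by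
    have := hK.encard_eq_encard hI
    simp [Set.ncard, this]
  exact h1 ▸ ncard_le_ncard hJK (M.set_finite K hK.indep.subset_ground)

lemma rk_mono [M.Finite] {X Y : Set α} (hXY : X ⊆ Y) : M.rk X ≤ M.rk Y := by
  refine csSup_le ⟨0, ⟨∅, ⟨M.empty_indep, empty_subset _⟩, by simp⟩⟩ ?_
  rintro n ⟨I, ⟨hI, hIX⟩, rfl⟩
  exact hI.ncard_le_rk (hIX.trans hXY)

lemma rk_submod [M.Finite] {A B : Set α} (hA : A ⊆ M.E) (hB : B ⊆ M.E) :
    M.rk (A ∪ B) + M.rk (A ∩ B) ≤ M.rk A + M.rk B := by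
  obtain ⟨I, hI⟩ := M.exists_isBasis (A ∩ B) ((inter_subset_left).trans hA)
  obtain ⟨J, hJ, hIJ⟩ := hI.indep.subset_isBasis_of_subset
    (hI.subset.trans ((inter_subset_left).trans subset_union_left)) (union_subset hA hB)
  have hJfin : J.Finite := M.set_finite J hJ.indep.subset_ground
  have hIeq : J ∩ (A ∩ B) = I := by
    refine (hI.eq_of_subset_indep (hJ.indep.subset inter_subset_left)
      (subset_inter hIJ hI.subset) inter_subset_right).symm
  have hcard : (J ∩ A).ncard + (J ∩ B).ncard = J.ncard + I.ncard := by
    rw [← hIeq]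
    have : J ∩ A ∪ J ∩ B = J := by
      rw [← inter_union_distrib_left, inter_eq_self_of_subset_left hJ.subset]
    have h2 := ncard_inter_add_ncard_union (J ∩ A) (J ∩ B) (hJfin.subset inter_subset_left)
      (hJfin.subset inter_subset_left)
    rw [this] at h2
    rw [inter_inter_distrib_left]
    omega
  have h3 : (J ∩ A).ncard ≤ M.rk A := (hJ.indep.subset inter_subset_left).ncard_le_rk
    inter_subset_right
  have h4 : (J ∩ B).ncard ≤ M.rk B := (hJ.indep.subset inter_subset_left).ncard_le_rk
    inter_subset_right
  rw [rk_eq_ncard_of_basis hJ, rk_eq_ncard_of_basis hI]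
  omega

lemma restrict_rk_eq [M.Finite] {R X : Set α} (hXR : X ⊆ R) : (M ↾ R).rk X = M.rk X := by
  have h : {I | (M ↾ R).Indep I ∧ I ⊆ X} = {I | M.Indep I ∧ I ⊆ X} := by
    ext I
    simp only [mem_setOf_eq, restrict_indep_iff]
    exact ⟨fun h => ⟨h.1.1, h.2⟩, fun h => ⟨⟨h.1, h.2.trans hXR⟩, h.2⟩⟩
  unfold rk
  rw [h]

lemma dual_rk_add [M.Finite] {X : Set α} (hX : X ⊆ M.E) :
    M✶.rk X + M.rk M.E = X.ncard + M.rk (M.E \ X) := by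
  have hEfin := M.ground_finite
  have hXfin := hEfin.subset hX
  obtain ⟨J, hJ⟩ := M.exists_isBasis (M.E \ X) diff_subset
  obtain ⟨B, hB, hJB⟩ := hJ.indep.subset_isBasis_of_subset (hJ.subset.trans diff_subset)
    Subset.rfl
  have hBbase : M.IsBase B := isBasis_ground_iff.1 hB
  have hBfin := hEfin.subset hB.indep.subset_ground
  have hJeq : B ∩ (M.E \ X) = J :=
    (hJ.eq_of_subset_indep (hB.indep.subset inter_subset_left)
      (subset_inter hJB hJ.subset) inter_subset_right).symm
  -- card facts
  have hBsplit : (B ∩ X).ncard + J.ncard = B.ncard := by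
    rw [← hJeq]
    have h1 : B ∩ (M.E \ X) = B \ X := by
      ext x
      simp only [mem_inter_iff, mem_diff]
      exact ⟨fun h => ⟨h.1, h.2.2⟩, fun h => ⟨h.1, hBbase.subset_ground h.1, h.2⟩⟩
    rw [h1]
    exact ncard_inter_add_ncard_diff_eq_ncard B X hBfin
  have hXsplit : (X ∩ B).ncard + (X \ B).ncard = X.ncard :=
    ncard_inter_add_ncard_diff_eq_ncard X B hXfin
  rw [rk_eq_ncard_of_basis hJ, rk_eq_ncard_of_basis hB]
  -- lower bound : X \ B is dual independent
  have hlow : (X \ B).ncard ≤ M✶.rk X := by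
    refine Indep.ncard_le_rk ?_ diff_subset
    rw [dual_indep_iff_exists ((diff_subset.trans hX))]
    exact ⟨B, hBbase, disjoint_sdiff_left⟩
  -- upper bound
  have hup : ∀ n ∈ Set.ncard '' {I | M✶.Indep I ∧ I ⊆ X}, n + B.ncard ≤ X.ncard + J.ncard := by
    rintro n ⟨I, ⟨hI, hIX⟩, rfl⟩
    obtain ⟨B', hB', hIB'⟩ := (dual_indep_iff_exists (M := M) (hIX.trans hX)).1 hI
    have hB'fin := hEfin.subset hB'.subset_ground
    have hB'card : B'.ncard = B.ncard := by
      have := hB'.encard_eq_encard_of_isBase hBbase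
      rw [Set.ncard, Set.ncard, this]
    have hB'split : (B' ∩ X).ncard + (B' \ X).ncard = B'.ncard :=
      ncard_inter_add_ncard_diff_eq_ncard B' X hB'fin
    have h5 : (B' \ X).ncard ≤ J.ncard := by
      rw [← rk_eq_ncard_of_basis hJ]
      exact (hB'.indep.subset diff_subset).ncard_le_rk
        (diff_subset_diff_left hB'.subset_ground)
    have h6 : I.ncard + (B' ∩ X).ncard ≤ X.ncard := by
      rw [← ncard_union_eq (hIB'.mono_right inter_subset_left) (hXfin.subset hIX)
        (hB'fin.subset inter_subset_left)]
      exact ncard_le_ncard (union_subset hIX inter_subset_right) hXfin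
    omega
  have hrkup : M✶.rk X + B.ncard ≤ X.ncard + J.ncard := by
    have hne : (Set.ncard '' {I | M✶.Indep I ∧ I ⊆ X}).Nonempty :=
      ⟨_, ⟨∅, ⟨M✶.empty_indep, empty_subset _⟩, rfl⟩⟩
    unfold rk
    have : sSup (Set.ncard '' {I | M✶.Indep I ∧ I ⊆ X}) ∈
        Set.ncard '' {I | M✶.Indep I ∧ I ⊆ X} := by
      exact Nat.sSup_mem hne (rk_bddAbove M✶ X)
    exact hup _ this
  have hcomm : (B ∩ X).ncard = (X ∩ B).ncard := by rw [inter_comm]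
  omega

lemma contract_rk_add [M.Finite] {C X : Set α} (hC : C ⊆ M.E) (hX : X ⊆ M.E \ C) :
    (M.contract' C).rk X + M.rk C = M.rk (X ∪ C) := by
  have hEfin := M.ground_finite
  have hdE : (M✶.delete' C).E = M.E \ C := rfl
  haveI : (M✶.delete' C).Finite := ⟨by rw [hdE]; exact hEfin.diff (t := C)⟩
  have hdel : ∀ S : Set α, S ⊆ M.E \ C → (M✶.delete' C).rk S = M✶.rk S := by
    intro S hS
    show (M✶ ↾ (M✶.E \ C)).rk S = M✶.rk S
    exact restrict_rk_eq (by rw [dual_ground]; exact hS)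
  have hset : (M.E \ C) \ X = M.E \ (X ∪ C) := by rw [diff_diff, union_comm]
  have ha := dual_rk_add (M := M✶.delete' C) (X := X) (by rw [hdE]; exact hX)
  rw [hdE, hdel _ Subset.rfl, hset, hdel _ (hset ▸ diff_subset)] at ha
  have hb := dual_rk_add (M := M) (X := M.E \ C) diff_subset
  rw [diff_diff_cancel_left hC] at hb
  have hc := dual_rk_add (M := M) (X := M.E \ (X ∪ C)) diff_subset
  rw [diff_diff_cancel_left (union_subset (hX.trans diff_subset) hC)] at hc
  have hd : X.ncard + (M.E \ (X ∪ C)).ncard = (M.E \ C).ncard := by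
    rw [← hset]
    have := ncard_diff_add_ncard_of_subset hX (hEfin.diff (t := C))
    omega
  have hgoal : ((M✶.delete' C)✶).rk X + M.rk C = M.rk (X ∪ C) := by omega
  exact hgoal


/-- the strong-map rank condition is preserved under contraction when the
domain contraction set is the preimage of the codomain contraction set. -/
theorem contract_strongMap_rank {α β : Type*} (M : Matroid α) (N : Matroid β)
    [M.Finite] [N.Finite] (f : α → β) (hf : f '' M.E ⊆ N.E)
    (hrank : ∀ X Y : Set α, X ⊆ Y → Y ⊆ M.E →
      N.rk (f '' Y) + M.rk X ≤ M.rk Y + N.rk (f '' X))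
    (Z' : Set β) (hZ' : Z' ⊆ N.E) :
    ∀ X Y : Set α, X ⊆ Y → Y ⊆ M.E \ (f ⁻¹' Z' ∩ M.E) →
      (N.contract' Z').rk (f '' Y) + (M.contract' (f ⁻¹' Z' ∩ M.E)).rk X ≤
        (M.contract' (f ⁻¹' Z' ∩ M.E)).rk Y + (N.contract' Z').rk (f '' X) := by
  intro X Y hXY hY
  set C := f ⁻¹' Z' ∩ M.E with hCdef
  have hC : C ⊆ M.E := inter_subset_right
  have hYE : Y ⊆ M.E := hY.trans diff_subset
  have hXE : X ⊆ M.E := hXY.trans hYE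
  have hX : X ⊆ M.E \ C := hXY.trans hY
  have himg : ∀ S : Set α, S ⊆ M.E \ C → f '' S ⊆ N.E \ Z' := by
    rintro S hS _ ⟨x, hx, rfl⟩
    have hxE : x ∈ M.E := (hS hx).1
    refine ⟨hf ⟨x, hxE, rfl⟩, fun hz => (hS hx).2 ⟨hz, hxE⟩⟩
  have hfX := himg X hX
  have hfY := himg Y hY
  have hfC : f '' C ⊆ Z' := by
    rintro _ ⟨x, hx, rfl⟩
    exact hx.1
  have hfCE : f '' C ⊆ N.E := hfC.trans hZ'
  have hfYE : f '' Y ⊆ N.E := hfY.trans diff_subset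
  have hfXY : f '' X ⊆ f '' Y := image_mono hXY
  have eMX := contract_rk_add (M := M) hC hX
  have eMY := contract_rk_add (M := M) hC hY
  have eNX := contract_rk_add (M := N) hZ' hfX
  have eNY := contract_rk_add (M := N) hZ' hfY
  have h1 := hrank (X ∪ C) (Y ∪ C) (union_subset_union_left C hXY) (union_subset hYE hC)
  rw [image_union, image_union] at h1
  have hsub := rk_submod (M := N) (A := f '' Y ∪ f '' C) (B := f '' X ∪ Z')
    (union_subset hfYE hfCE) (union_subset (hfXY.trans hfYE) hZ')
  have h2 : N.rk (f '' Y ∪ Z') ≤ N.rk ((f '' Y ∪ f '' C) ∪ (f '' X ∪ Z')) :=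
    rk_mono (union_subset (subset_union_left.trans subset_union_left)
      (subset_union_right.trans subset_union_right))
  have h3 : N.rk (f '' X ∪ f '' C) ≤ N.rk ((f '' Y ∪ f '' C) ∩ (f '' X ∪ Z')) :=
    rk_mono (subset_inter
      (union_subset (hfXY.trans subset_union_left) subset_union_right)
      (union_subset subset_union_left (hfC.trans subset_union_right)))
  omega


end Matroid
end
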